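/- Let G ⊙_k H denote the rooted grafting of rooted graphs G and H: their roots are joined by a path of length k. For stars T_{m} and T_{n} rooted at their centers, and a = 1 if m is odd, 2 if m is even, b = 1 if n is odd, 2 if n is even, one has 𝒢(T_{m} ⊙_k T_{n}) = 𝒢(T_{a} ⊙_k T_{b}) for all positive integers m, n, k. -/

import Mathlib

/-- The minimum excluded value of a finite set of naturals. -/
noncomputable def mex (s : Finset ℕ) : ℕ := sInf {n : ℕ | n ∉ s}

/-- Node-Kayles Grundy value of the position given by the induced subgraph of `G`
on the finite vertex set `s`: a move picks a vertex `v ∈ s` and removes its closed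
neighborhood, and the Grundy value is the mex of the Grundy values of the options.
(For a disconnected position this agrees with the nim-sum of the components'
Grundy values, by the Sprague–Grundy theory.) -/
noncomputable def nkGrundy {V : Type*} [DecidableEq V] (G : SimpleGraph V) [DecidableRel G.Adj]
    (s : Finset V) : ℕ :=
  mex (s.attach.image fun v =>
    nkGrundy G ((s.erase v.1).filter fun w => ¬ G.Adj v.1 w))
termination_by s.card
decreasing_by
  exact lt_of_le_of_lt (Finset.card_filter_le _ _) (Finset.card_erase_lt_of_mem v.2)

instance {V : Type*} (r : V → V → Prop) [DecidableEq V] [DecidableRel r] :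
    DecidableRel (SimpleGraph.fromRel r).Adj :=
  fun a b => decidable_of_iff _ (SimpleGraph.fromRel_adj r a b).symm

/-- The rooted grafting `T_{m} ⊙_k T_{n}` of two stars: the centers of a star
with `m` leaves and a star with `n` leaves are joined by a path of length `k`
(i.e. with `k` edges and `k - 1` internal vertices).  Encoding on ℕ: first
center `0`, its leaves `1, …, m`, internal path vertices `m+1, …, m+k-1`,
second center `m+k`, its leaves `m+k+1, …, m+k+n`.  The vertex set is
`{0, …, m+k+n}`. -/
def doubleStar (m n k : ℕ) : SimpleGraph ℕ :=
  SimpleGraph.fromRel (fun a b =>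
    (a = 0 ∧ 1 ≤ b ∧ b ≤ m) ∨
    (a = 0 ∧ b = m + 1) ∨
    (m + 1 ≤ a ∧ a < m + k ∧ b = a + 1) ∨
    (a = m + k ∧ m + k + 1 ≤ b ∧ b ≤ m + k + n))

instance (m n k : ℕ) : DecidableRel (doubleStar m n k).Adj :=
  fun a b => decidable_of_iff _ (SimpleGraph.fromRel_adj _ a b).symm

set_option maxHeartbeats 1000000

lemma mex_not_mem (s : Finset ℕ) : mex s ∉ s := by
  have h : {n : ℕ | n ∉ s}.Nonempty := by
    obtain ⟨n, hn⟩ := Infinite.exists_notMem_finset s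
    exact ⟨n, hn⟩
  exact Nat.sInf_mem h

lemma mem_of_lt_mex {s : Finset ℕ} {k : ℕ} (h : k < mex s) : k ∈ s := by
  by_contra hk
  exact absurd (Nat.sInf_le hk) (not_le.2 h)

lemma mex_eq_of {s : Finset ℕ} {n : ℕ} (h1 : n ∉ s) (h2 : ∀ k < n, k ∈ s) : mex s = n := by
  refine le_antisymm (Nat.sInf_le h1) ?_
  by_contra h
  exact absurd (h2 _ (not_le.1 h)) (mex_not_mem s)

lemma xor_one (n : ℕ) : n ^^^ 1 = if n % 2 = 0 then n + 1 else n - 1 := by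
  rcases Nat.even_or_odd n with ⟨a, ha⟩ | ⟨a, ha⟩
  · have : n = Nat.bit false a := by simp [Nat.bit, ha]; omega
    rw [this]
    have h1 : (1:ℕ) = Nat.bit true 0 := rfl
    rw [h1, Nat.xor_bit]
    simp only [Nat.bit, Bool.bne_true, Bool.not_false, Nat.xor_zero, cond_true, cond_false]
    exact (if_pos (by omega)).symm
  · have : n = Nat.bit true a := by simp [Nat.bit, ha]
    rw [this]
    have h1 : (1:ℕ) = Nat.bit true 0 := rfl
    rw [h1, Nat.xor_bit]
    simp only [Nat.bit, Bool.bne_true, Bool.not_true, Nat.xor_zero, cond_true, cond_false]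
    exact (Nat.add_sub_cancel (n := 2 * a) (m := 1)).symm.trans (if_neg (by omega)).symm

/-- unfolding with plain image -/
lemma nkGrundy_eq {V : Type*} [DecidableEq V] (G : SimpleGraph V) [DecidableRel G.Adj]
    (s : Finset V) :
    nkGrundy G s = mex (s.image fun v => nkGrundy G ((s.erase v).filter fun w => ¬ G.Adj v w)) := by
  rw [nkGrundy]
  congr 1
  ext x
  simp only [Finset.mem_image, Finset.mem_attach, true_and, Subtype.exists, exists_prop]

lemma mex_shift (S : Finset ℕ) :
    mex (insert (mex S) (S.image fun x => x ^^^ 1)) = mex S ^^^ 1 := by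
  apply mex_eq_of
  · intro hmem
    rcases Finset.mem_insert.1 hmem with h | h
    · have := xor_one (mex S); split_ifs at this <;> omega
    · obtain ⟨a, ha, hae⟩ := Finset.mem_image.1 h
      have hag : a = mex S := by
        have h2 := congrArg (fun x => x ^^^ 1) hae
        simpa [Nat.xor_xor_cancel_right] using h2
      exact mex_not_mem S (hag ▸ ha)
  · intro k hk
    by_cases hkg : k = mex S
    · simp [hkg]
    · refine Finset.mem_insert_of_mem (Finset.mem_image.2 ⟨k ^^^ 1, ?_, Nat.xor_xor_cancel_right _ _⟩)
      apply mem_of_lt_mex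
      have h1 := xor_one k
      have h2 := xor_one (mex S)
      split_ifs at h1 h2 <;> omega

lemma move_insert {V : Type*} [DecidableEq V] (G : SimpleGraph V) [DecidableRel G.Adj]
    (s : Finset V) (u v : V) (hu : u ∉ s) (hv : v ∈ s) (hvu : ¬ G.Adj v u) :
    ((insert u s).erase v).filter (fun w => ¬ G.Adj v w)
      = insert u ((s.erase v).filter fun w => ¬ G.Adj v w) := by
  ext w
  simp only [Finset.mem_filter, Finset.mem_erase, Finset.mem_insert]
  have h3 : w = u → w ≠ v := by rintro rfl h; rw [h] at hu; exact hu hv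
  have h1 : w = u → ¬ G.Adj v w := by rintro rfl; exact hvu
  tauto

theorem grundy_isolated {V : Type*} [DecidableEq V] (G : SimpleGraph V) [DecidableRel G.Adj]
    (s : Finset V) (u : V) (hu : u ∉ s) (hiso : ∀ w ∈ s, ¬ G.Adj u w) :
    nkGrundy G (insert u s) = nkGrundy G s ^^^ 1 := by
  have hopts : ((insert u s).image fun v => nkGrundy G (((insert u s).erase v).filter fun w => ¬ G.Adj v w))
      = insert (nkGrundy G s)
          ((s.image fun v => nkGrundy G ((s.erase v).filter fun w => ¬ G.Adj v w)).image fun x => x ^^^ 1) := by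
    ext x
    constructor
    · intro hx
      obtain ⟨v, hv, rfl⟩ := Finset.mem_image.1 hx
      rcases Finset.mem_insert.1 hv with rfl | hv
      · apply Finset.mem_insert.2; left
        congr 1
        rw [Finset.erase_insert hu, Finset.filter_true_of_mem]
        intro w hw; exact hiso w hw
      · apply Finset.mem_insert.2; right
        refine Finset.mem_image.2 ⟨nkGrundy G ((s.erase v).filter fun w => ¬G.Adj v w),
          Finset.mem_image.2 ⟨v, hv, rfl⟩, ?_⟩
        have hset := move_insert G s u v hu hv (fun h => hiso v hv h.symm)
        rw [hset, grundy_isolated G _ u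
          (fun hmem => hu (Finset.mem_of_mem_erase (Finset.mem_of_mem_filter _ hmem)))
          (fun w hw => hiso w (Finset.mem_of_mem_erase (Finset.mem_of_mem_filter _ hw)))]
    · intro hx
      rcases Finset.mem_insert.1 hx with rfl | hx
      · refine Finset.mem_image.2 ⟨u, Finset.mem_insert_self u s, ?_⟩
        congr 1
        rw [Finset.erase_insert hu, Finset.filter_true_of_mem]
        intro w hw; exact hiso w hw
      · obtain ⟨y, hy, rfl⟩ := Finset.mem_image.1 hx
        obtain ⟨v, hv, rfl⟩ := Finset.mem_image.1 hy
        refine Finset.mem_image.2 ⟨v, Finset.mem_insert_of_mem hv, ?_⟩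
        have hset := move_insert G s u v hu hv (fun h => hiso v hv h.symm)
        rw [hset, grundy_isolated G _ u
          (fun hmem => hu (Finset.mem_of_mem_erase (Finset.mem_of_mem_filter _ hmem)))
          (fun w hw => hiso w (Finset.mem_of_mem_erase (Finset.mem_of_mem_filter _ hw)))]
  rw [nkGrundy_eq G (insert u s), hopts, nkGrundy_eq G s]
  exact mex_shift _
termination_by s.card
decreasing_by
  all_goals exact lt_of_le_of_lt (Finset.card_filter_le _ _) (Finset.card_erase_lt_of_mem ‹_›)

lemma mex_insert_xor_one (S : Finset ℕ) : mex (insert (mex S ^^^ 1) S) = mex S := by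
  apply mex_eq_of
  · intro h
    rcases Finset.mem_insert.1 h with h | h
    · have := xor_one (mex S); split_ifs at this <;> omega
    · exact mex_not_mem S h
  · exact fun k hk => Finset.mem_insert_of_mem (mem_of_lt_mex hk)

theorem grundy_pair {V : Type*} [DecidableEq V] (G : SimpleGraph V) [DecidableRel G.Adj]
    (s : Finset V) (u v : V) (hu : u ∉ s) (hv : v ∉ s) (huv : u ≠ v)
    (hui : ∀ w ∈ s, ¬ G.Adj u w) (hvi : ∀ w ∈ s, ¬ G.Adj v w) (huv2 : ¬ G.Adj u v) :
    nkGrundy G (insert u (insert v s)) = nkGrundy G s := by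
  have huv' : u ∉ insert v s := by simp [huv, hu]
  have hvu' : v ∉ insert u s := by simp [Ne.symm huv, hv]
  have hcomm : insert u (insert v s) = insert v (insert u s) := Finset.insert_comm u v s
  have hmu : ((insert u (insert v s)).erase u).filter (fun w => ¬ G.Adj u w) = insert v s := by
    rw [Finset.erase_insert huv', Finset.filter_true_of_mem]
    intro w hw
    rcases Finset.mem_insert.1 hw with rfl | hw
    · exact huv2
    · exact hui w hw
  have hmv : ((insert u (insert v s)).erase v).filter (fun w => ¬ G.Adj v w) = insert u s := by
    rw [hcomm, Finset.erase_insert hvu', Finset.filter_true_of_mem]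
    intro w hw
    rcases Finset.mem_insert.1 hw with rfl | hw
    · exact fun h => huv2 h.symm
    · exact hvi w hw
  have hmw : ∀ w ∈ s, ((insert u (insert v s)).erase w).filter (fun w' => ¬ G.Adj w w')
      = insert u (insert v ((s.erase w).filter fun w' => ¬ G.Adj w w')) := by
    intro w hw
    rw [move_insert G (insert v s) u w huv' (Finset.mem_insert_of_mem hw)
        (fun h => hui w hw h.symm),
      move_insert G s v w hv hw (fun h => hvi w hw h.symm)]
  have hopts : ((insert u (insert v s)).image fun w =>
        nkGrundy G (((insert u (insert v s)).erase w).filter fun w' => ¬ G.Adj w w'))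
      = insert (nkGrundy G s ^^^ 1)
          (s.image fun w => nkGrundy G ((s.erase w).filter fun w' => ¬ G.Adj w w')) := by
    ext x
    constructor
    · intro hx
      obtain ⟨w, hw, rfl⟩ := Finset.mem_image.1 hx
      rcases Finset.mem_insert.1 hw with rfl | hw
      · apply Finset.mem_insert.2; left
        rw [hmu, grundy_isolated G s v hv hvi]
      · rcases Finset.mem_insert.1 hw with rfl | hw
        · apply Finset.mem_insert.2; left
          rw [hmv, grundy_isolated G s u hu hui]
        · apply Finset.mem_insert.2; right
          refine Finset.mem_image.2 ⟨w, hw, ?_⟩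
          rw [hmw w hw]
          have hsub : ∀ w' ∈ (s.erase w).filter fun w' => ¬ G.Adj w w', w' ∈ s :=
            fun w' h => Finset.mem_of_mem_erase (Finset.mem_of_mem_filter _ h)
          exact (grundy_pair G _ u v (fun h => hu (hsub u h)) (fun h => hv (hsub v h)) huv
            (fun w' h => hui w' (hsub w' h)) (fun w' h => hvi w' (hsub w' h)) huv2).symm ▸ rfl
    · intro hx
      rcases Finset.mem_insert.1 hx with rfl | hx
      · refine Finset.mem_image.2 ⟨u, Finset.mem_insert_self _ _, ?_⟩
        rw [hmu, grundy_isolated G s v hv hvi]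
      · obtain ⟨w, hw, rfl⟩ := Finset.mem_image.1 hx
        refine Finset.mem_image.2 ⟨w, Finset.mem_insert_of_mem (Finset.mem_insert_of_mem hw), ?_⟩
        rw [hmw w hw]
        have hsub : ∀ w' ∈ (s.erase w).filter fun w' => ¬ G.Adj w w', w' ∈ s :=
          fun w' h => Finset.mem_of_mem_erase (Finset.mem_of_mem_filter _ h)
        exact grundy_pair G _ u v (fun h => hu (hsub u h)) (fun h => hv (hsub v h)) huv
          (fun w' h => hui w' (hsub w' h)) (fun w' h => hvi w' (hsub w' h)) huv2
  rw [nkGrundy_eq G (insert u (insert v s)), hopts, nkGrundy_eq G s]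
  exact mex_insert_xor_one _
termination_by s.card
decreasing_by
  all_goals exact lt_of_le_of_lt (Finset.card_filter_le _ _) (Finset.card_erase_lt_of_mem ‹_›)

theorem grundy_map {V W : Type*} [DecidableEq V] [DecidableEq W]
    (G : SimpleGraph V) (H : SimpleGraph W) [DecidableRel G.Adj] [DecidableRel H.Adj]
    (f : V → W) (s : Finset V)
    (hinj : ∀ a ∈ s, ∀ b ∈ s, f a = f b → a = b)
    (hadj : ∀ a ∈ s, ∀ b ∈ s, (G.Adj a b ↔ H.Adj (f a) (f b))) :
    nkGrundy H (s.image f) = nkGrundy G s := by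
  rw [nkGrundy_eq H, nkGrundy_eq G]
  congr 1
  rw [Finset.image_image]
  refine Finset.image_congr ?_
  intro v hv
  simp only [Function.comp]
  have hmove : ((s.image f).erase (f v)).filter (fun w => ¬ H.Adj (f v) w)
      = ((s.erase v).filter (fun w => ¬ G.Adj v w)).image f := by
    ext w
    simp only [Finset.mem_filter, Finset.mem_erase, Finset.mem_image]
    constructor
    · rintro ⟨⟨hwv, ⟨b, hb, rfl⟩⟩, hnadj⟩
      exact ⟨b, ⟨⟨fun h => hwv (h ▸ rfl), hb⟩, fun h => hnadj ((hadj v hv b hb).1 h)⟩, rfl⟩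
    · rintro ⟨b, ⟨⟨hbv, hb⟩, hnadj⟩, rfl⟩
      exact ⟨⟨fun h => hbv (hinj b hb v hv h), ⟨b, hb, rfl⟩⟩,
        fun h => hnadj ((hadj v hv b hb).2 h)⟩
  rw [hmove]
  have hsub : ∀ w' ∈ (s.erase v).filter fun w => ¬ G.Adj v w, w' ∈ s :=
    fun w' h => Finset.mem_of_mem_erase (Finset.mem_of_mem_filter _ h)
  exact grundy_map G H f _ (fun a ha b hb => hinj a (hsub a ha) b (hsub b hb))
    (fun a ha b hb => hadj a (hsub a ha) b (hsub b hb))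
termination_by s.card
decreasing_by
  exact lt_of_le_of_lt (Finset.card_filter_le _ _) (Finset.card_erase_lt_of_mem ‹_›)

theorem grundy_pendant_pair {V : Type*} [DecidableEq V] (G : SimpleGraph V) [DecidableRel G.Adj]
    (s : Finset V) (c l u v : V)
    (hc : c ∈ s) (hl : l ∈ s) (hlc : l ≠ c) (hladj : G.Adj l c)
    (hlpend : ∀ w ∈ s, G.Adj l w → w = c)
    (hu : u ∉ s) (hv : v ∉ s) (huv : u ≠ v)
    (huc : G.Adj u c) (hvc : G.Adj v c)
    (hupend : ∀ w ∈ s, G.Adj u w → w = c)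
    (hvpend : ∀ w ∈ s, G.Adj v w → w = c)
    (huvadj : ¬ G.Adj u v) :
    nkGrundy G (insert u (insert v s)) = nkGrundy G s := by
  classical
  have huv' : u ∉ insert v s := by simp [huv, hu]
  have hvu' : v ∉ insert u s := by simp [Ne.symm huv, hv]
  have hcomm : insert u (insert v s) = insert v (insert u s) := Finset.insert_comm u v s
  set tgt := (s.erase c).erase l with htgt
  have htgt_sub : ∀ w ∈ tgt, w ∈ s := fun w h =>
    Finset.mem_of_mem_erase (Finset.mem_of_mem_erase h)
  have htgt_ne_c : ∀ w ∈ tgt, w ≠ c := fun w h =>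
    Finset.ne_of_mem_erase (Finset.mem_of_mem_erase h)
  have hmu : ((insert u (insert v s)).erase u).filter (fun w => ¬ G.Adj u w)
      = insert v (s.erase c) := by
    rw [Finset.erase_insert huv']
    ext w
    simp only [Finset.mem_filter, Finset.mem_insert, Finset.mem_erase]
    constructor
    · rintro ⟨(rfl | hw), hnadj⟩
      · exact Or.inl rfl
      · exact Or.inr ⟨fun h => hnadj (h ▸ huc), hw⟩
    · rintro (rfl | ⟨hwc, hw⟩)
      · exact ⟨Or.inl rfl, huvadj⟩
      · exact ⟨Or.inr hw, fun h => hwc (hupend w hw h)⟩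
  have hmv : ((insert u (insert v s)).erase v).filter (fun w => ¬ G.Adj v w)
      = insert u (s.erase c) := by
    rw [hcomm, Finset.erase_insert hvu']
    ext w
    simp only [Finset.mem_filter, Finset.mem_insert, Finset.mem_erase]
    constructor
    · rintro ⟨(rfl | hw), hnadj⟩
      · exact Or.inl rfl
      · exact Or.inr ⟨fun h => hnadj (h ▸ hvc), hw⟩
    · rintro (rfl | ⟨hwc, hw⟩)
      · exact ⟨Or.inl rfl, fun h => huvadj h.symm⟩
      · exact ⟨Or.inr hw, fun h => hwc (hvpend w hw h)⟩
  have hml : ((s.erase l).filter fun w => ¬ G.Adj l w) = tgt := by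
    ext w
    simp only [htgt, Finset.mem_filter, Finset.mem_erase]
    constructor
    · rintro ⟨⟨hwl, hw⟩, hnadj⟩
      exact ⟨hwl, fun h => hnadj (h ▸ hladj), hw⟩
    · rintro ⟨hwl, hwc, hw⟩
      exact ⟨⟨hwl, hw⟩, fun h => hwc (hlpend w hw h)⟩
  have h2 : s.erase c = insert l tgt := by
    rw [htgt, Finset.insert_erase (Finset.mem_erase.2 ⟨hlc, hl⟩)]
  have h3 : nkGrundy G (s.erase c) = nkGrundy G tgt ^^^ 1 := by
    rw [h2]
    refine grundy_isolated G _ l (Finset.notMem_erase _ _) ?_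
    intro w hw h
    exact htgt_ne_c w hw (hlpend w (htgt_sub w hw) h)
  have hval_u : nkGrundy G (insert v (s.erase c)) = nkGrundy G tgt := by
    have h1 : nkGrundy G (insert v (s.erase c)) = nkGrundy G (s.erase c) ^^^ 1 := by
      refine grundy_isolated G _ v (fun h => hv (Finset.mem_of_mem_erase h)) ?_
      intro w hw h
      exact (Finset.ne_of_mem_erase hw) (hvpend w (Finset.mem_of_mem_erase hw) h)
    rw [h1, h3, Nat.xor_xor_cancel_right]
  have hval_v : nkGrundy G (insert u (s.erase c)) = nkGrundy G tgt := by
    have h1 : nkGrundy G (insert u (s.erase c)) = nkGrundy G (s.erase c) ^^^ 1 := by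
      refine grundy_isolated G _ u (fun h => hu (Finset.mem_of_mem_erase h)) ?_
      intro w hw h
      exact (Finset.ne_of_mem_erase hw) (hupend w (Finset.mem_of_mem_erase hw) h)
    rw [h1, h3, Nat.xor_xor_cancel_right]
  have hws : ∀ w ∈ s,
      nkGrundy G (((insert u (insert v s)).erase w).filter fun w' => ¬ G.Adj w w')
        = nkGrundy G ((s.erase w).filter fun w' => ¬ G.Adj w w') := by
    intro w hw
    by_cases hwc : w = c
    · -- move on c removes u and v as well
      subst hwc
      congr 1
      ext w'
      simp only [Finset.mem_filter, Finset.mem_erase, Finset.mem_insert]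
      constructor
      · rintro ⟨⟨hne, (rfl | rfl | hw')⟩, hnadj⟩
        · exact absurd huc.symm hnadj
        · exact absurd hvc.symm hnadj
        · exact ⟨⟨hne, hw'⟩, hnadj⟩
      · rintro ⟨⟨hne, hw'⟩, hnadj⟩
        exact ⟨⟨hne, Or.inr (Or.inr hw')⟩, hnadj⟩
    · -- move on w ≠ c : u and v survive
      have hwu : ¬ G.Adj w u := fun h => hwc (hupend w hw h.symm)
      have hwv : ¬ G.Adj w v := fun h => hwc (hvpend w hw h.symm)
      have hrw : ((insert u (insert v s)).erase w).filter (fun w' => ¬ G.Adj w w')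
          = insert u (insert v ((s.erase w).filter fun w' => ¬ G.Adj w w')) := by
        rw [move_insert G (insert v s) u w huv' (Finset.mem_insert_of_mem hw) hwu,
          move_insert G s v w hv hw hwv]
      rw [hrw]
      set t := (s.erase w).filter fun w' => ¬ G.Adj w w' with ht
      have htsub : ∀ w' ∈ t, w' ∈ s := fun w' h =>
        Finset.mem_of_mem_erase (Finset.mem_of_mem_filter _ h)
      have hut : u ∉ t := fun h => hu (htsub u h)
      have hvt : v ∉ t := fun h => hv (htsub v h)
      by_cases hadjwc : G.Adj w c
      · -- c is removed: u, v become isolated; use grundy_pair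
        have hct : c ∉ t := by
          intro h
          exact (Finset.mem_filter.1 h).2 hadjwc
        refine grundy_pair G t u v hut hvt huv ?_ ?_ huvadj
        · intro w' hw' h
          exact hct ((hupend w' (htsub w' hw') h) ▸ hw')
        · intro w' hw' h
          exact hct ((hvpend w' (htsub w' hw') h) ▸ hw')
      · -- c survives, and so does the pendant l : recurse
        have hwl : w ≠ l := fun h => hadjwc (h ▸ hladj)
        have hct : c ∈ t := Finset.mem_filter.2 ⟨Finset.mem_erase.2 ⟨fun h => hwc h.symm, hc⟩,
          hadjwc⟩
        have hlt : l ∈ t := by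
          refine Finset.mem_filter.2 ⟨Finset.mem_erase.2 ⟨fun h => hwl h.symm, hl⟩, ?_⟩
          intro h
          exact hwc (hlpend w hw h.symm)
        exact grundy_pendant_pair G t c l u v hct hlt hlc hladj
          (fun w' hw' h => hlpend w' (htsub w' hw') h) hut hvt huv huc hvc
          (fun w' hw' h => hupend w' (htsub w' hw') h)
          (fun w' hw' h => hvpend w' (htsub w' hw') h) huvadj
  -- now compare the option sets
  have hopts : ((insert u (insert v s)).image fun w =>
        nkGrundy G (((insert u (insert v s)).erase w).filter fun w' => ¬ G.Adj w w'))
      = s.image fun w => nkGrundy G ((s.erase w).filter fun w' => ¬ G.Adj w w') := by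
    apply Finset.Subset.antisymm
    · intro x hx
      obtain ⟨w, hw, rfl⟩ := Finset.mem_image.1 hx
      rcases Finset.mem_insert.1 hw with rfl | hw
      · refine Finset.mem_image.2 ⟨l, hl, ?_⟩
        rw [hmu, hval_u, hml]
      · rcases Finset.mem_insert.1 hw with rfl | hw
        · refine Finset.mem_image.2 ⟨l, hl, ?_⟩
          rw [hmv, hval_v, hml]
        · exact Finset.mem_image.2 ⟨w, hw, (hws w hw).symm ▸ rfl⟩
    · intro x hx
      obtain ⟨w, hw, rfl⟩ := Finset.mem_image.1 hx
      exact Finset.mem_image.2 ⟨w, Finset.mem_insert_of_mem (Finset.mem_insert_of_mem hw),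
        hws w hw⟩
  rw [nkGrundy_eq G (insert u (insert v s)), nkGrundy_eq G s, hopts]
termination_by s.card
decreasing_by
  exact lt_of_le_of_lt (Finset.card_filter_le _ _) (Finset.card_erase_lt_of_mem ‹_›)

lemma doubleStar_adj (m n k a b : ℕ) :
    (doubleStar m n k).Adj a b ↔ a ≠ b ∧
      (((a = 0 ∧ 1 ≤ b ∧ b ≤ m) ∨ (a = 0 ∧ b = m + 1) ∨
        (m + 1 ≤ a ∧ a < m + k ∧ b = a + 1) ∨
        (a = m + k ∧ m + k + 1 ≤ b ∧ b ≤ m + k + n)) ∨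
       ((b = 0 ∧ 1 ≤ a ∧ a ≤ m) ∨ (b = 0 ∧ a = m + 1) ∨
        (m + 1 ≤ b ∧ b < m + k ∧ a = b + 1) ∨
        (b = m + k ∧ m + k + 1 ≤ a ∧ a ≤ m + k + n))) :=
  SimpleGraph.fromRel_adj _ a b

theorem stepM (m n k : ℕ) (hm : 1 ≤ m) (hn : 1 ≤ n) (hk : 1 ≤ k) :
    nkGrundy (doubleStar (m + 2) n k) (Finset.range ((m + 2) + k + n + 1)) =
      nkGrundy (doubleStar m n k) (Finset.range (m + k + n + 1)) := by
  set G2 := doubleStar (m + 2) n k with hG2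
  set s0 : Finset ℕ := ((Finset.range ((m + 2) + k + n + 1)).erase (m + 1)).erase (m + 2)
    with hs0
  have hmem : ∀ x, x ∈ s0 ↔ x < m + k + n + 3 ∧ x ≠ m + 1 ∧ x ≠ m + 2 := by
    intro x
    simp only [hs0, Finset.mem_erase, Finset.mem_range]
    omega
  have hins : Finset.range ((m + 2) + k + n + 1) = insert (m + 1) (insert (m + 2) s0) := by
    ext x
    simp only [Finset.mem_insert, hmem x, Finset.mem_range]
    omega
  have h1 : nkGrundy G2 (Finset.range ((m + 2) + k + n + 1)) = nkGrundy G2 s0 := by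
    rw [hins]
    refine grundy_pendant_pair G2 s0 0 1 (m + 1) (m + 2) ?_ ?_ ?_ ?_ ?_ ?_ ?_ ?_ ?_ ?_ ?_ ?_ ?_
    · rw [hmem]; omega
    · rw [hmem]; omega
    · omega
    · rw [hG2, doubleStar_adj]; omega
    · intro w hw hadj
      rw [hmem] at hw
      rw [hG2, doubleStar_adj] at hadj
      omega
    · rw [hmem]; omega
    · rw [hmem]; omega
    · omega
    · rw [hG2, doubleStar_adj]; omega
    · rw [hG2, doubleStar_adj]; omega
    · intro w hw hadj
      rw [hmem] at hw
      rw [hG2, doubleStar_adj] at hadj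
      omega
    · intro w hw hadj
      rw [hmem] at hw
      rw [hG2, doubleStar_adj] at hadj
      omega
    · rw [hG2, doubleStar_adj]; omega
  have h2 : nkGrundy (doubleStar m n k) (s0.image fun x => if x ≤ m then x else x - 2)
      = nkGrundy G2 s0 := by
    refine grundy_map G2 (doubleStar m n k) (fun x => if x ≤ m then x else x - 2) s0 ?_ ?_
    · intro a ha b hb h
      rw [hmem] at ha hb
      split_ifs at h <;> omega
    · intro a ha b hb
      rw [hmem] at ha
      rw [hmem] at hb
      rw [hG2, doubleStar_adj, doubleStar_adj]
      refine and_congr (by split_ifs <;> omega)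
        (or_congr
          (or_congr (by split_ifs <;> omega)
            (or_congr (by split_ifs <;> omega)
              (or_congr (by split_ifs <;> omega) (by split_ifs <;> omega))))
          (or_congr (by split_ifs <;> omega)
            (or_congr (by split_ifs <;> omega)
              (or_congr (by split_ifs <;> omega) (by split_ifs <;> omega)))))
  have h3 : (s0.image fun x => if x ≤ m then x else x - 2) = Finset.range (m + k + n + 1) := by
    ext y
    simp only [Finset.mem_image, Finset.mem_range]
    constructor
    · rintro ⟨x, hx, rfl⟩
      rw [hmem] at hx
      split_ifs <;> omega
    · intro hy
      refine ⟨if y ≤ m then y else y + 2, ?_, ?_⟩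
      · rw [hmem]; split_ifs <;> omega
      · split_ifs <;> omega
  rw [h1, ← h2, h3]

theorem stepN (m n k : ℕ) (hm : 1 ≤ m) (hn : 1 ≤ n) (hk : 1 ≤ k) :
    nkGrundy (doubleStar m (n + 2) k) (Finset.range (m + k + (n + 2) + 1)) =
      nkGrundy (doubleStar m n k) (Finset.range (m + k + n + 1)) := by
  set G2 := doubleStar m (n + 2) k with hG2
  have hins : Finset.range (m + k + (n + 2) + 1)
      = insert (m + k + n + 1) (insert (m + k + n + 2) (Finset.range (m + k + n + 1))) := by
    ext x
    simp only [Finset.mem_insert, Finset.mem_range]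
    omega
  have h1 : nkGrundy G2 (Finset.range (m + k + (n + 2) + 1))
      = nkGrundy G2 (Finset.range (m + k + n + 1)) := by
    rw [hins]
    refine grundy_pendant_pair G2 (Finset.range (m + k + n + 1)) (m + k) (m + k + 1)
      (m + k + n + 1) (m + k + n + 2) ?_ ?_ ?_ ?_ ?_ ?_ ?_ ?_ ?_ ?_ ?_ ?_ ?_
    · rw [Finset.mem_range]; omega
    · rw [Finset.mem_range]; omega
    · omega
    · rw [hG2, doubleStar_adj]; omega
    · intro w hw hadj
      rw [Finset.mem_range] at hw
      rw [hG2, doubleStar_adj] at hadj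
      omega
    · rw [Finset.mem_range]; omega
    · rw [Finset.mem_range]; omega
    · omega
    · rw [hG2, doubleStar_adj]; omega
    · rw [hG2, doubleStar_adj]; omega
    · intro w hw hadj
      rw [Finset.mem_range] at hw
      rw [hG2, doubleStar_adj] at hadj
      omega
    · intro w hw hadj
      rw [Finset.mem_range] at hw
      rw [hG2, doubleStar_adj] at hadj
      omega
    · rw [hG2, doubleStar_adj]; omega
  have h2 : nkGrundy (doubleStar m n k) ((Finset.range (m + k + n + 1)).image fun x => x)
      = nkGrundy G2 (Finset.range (m + k + n + 1)) := by
    refine grundy_map G2 (doubleStar m n k) (fun x => x) (Finset.range (m + k + n + 1))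
      (fun a _ b _ h => h) ?_
    intro a ha b hb
    rw [Finset.mem_range] at ha hb
    rw [hG2, doubleStar_adj, doubleStar_adj]
    refine and_congr (by omega)
      (or_congr
        (or_congr (by omega)
          (or_congr (by omega)
            (or_congr (by omega) (by omega))))
        (or_congr (by omega)
          (or_congr (by omega)
            (or_congr (by omega) (by omega)))))
  have h3 : ((Finset.range (m + k + n + 1)).image fun x => x) = Finset.range (m + k + n + 1) :=
    by simp
  rw [h1, ← h2, h3]

theorem mainM : ∀ m, 1 ≤ m → ∀ n k, 1 ≤ n → 1 ≤ k →
    nkGrundy (doubleStar m n k) (Finset.range (m + k + n + 1)) =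
      nkGrundy (doubleStar (if Odd m then 1 else 2) n k)
        (Finset.range ((if Odd m then 1 else 2) + k + n + 1)) := by
  intro m
  induction m using Nat.strong_induction_on with
  | _ m ih =>
    intro hm n k hn hk
    rcases lt_or_ge m 3 with h3 | h3
    · interval_cases m
      · rw [if_pos (by decide : Odd 1)]
      · rw [if_neg (by decide : ¬ Odd 2)]
    · obtain ⟨m', rfl⟩ : ∃ m', m = m' + 2 := ⟨m - 2, by omega⟩
      rw [stepM m' n k (by omega) hn hk]
      have hodd : (if Odd (m' + 2) then 1 else 2) = (if Odd m' then 1 else 2) := by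
        have h : Odd (m' + 2) ↔ Odd m' := by rw [Nat.odd_iff, Nat.odd_iff]; omega
        simp only [h]
      rw [hodd]
      exact ih m' (by omega) (by omega) n k hn hk

theorem mainN : ∀ n, 1 ≤ n → ∀ m k, 1 ≤ m → 1 ≤ k →
    nkGrundy (doubleStar m n k) (Finset.range (m + k + n + 1)) =
      nkGrundy (doubleStar m (if Odd n then 1 else 2) k)
        (Finset.range (m + k + (if Odd n then 1 else 2) + 1)) := by
  intro n
  induction n using Nat.strong_induction_on with
  | _ n ih =>
    intro hn m k hm hk
    rcases lt_or_ge n 3 with h3 | h3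
    · interval_cases n
      · rw [if_pos (by decide : Odd 1)]
      · rw [if_neg (by decide : ¬ Odd 2)]
    · obtain ⟨n', rfl⟩ : ∃ n', n = n' + 2 := ⟨n - 2, by omega⟩
      rw [stepN m n' k hm (by omega) hk]
      have hodd : (if Odd (n' + 2) then 1 else 2) = (if Odd n' then 1 else 2) := by
        have h : Odd (n' + 2) ↔ Odd n' := by rw [Nat.odd_iff, Nat.odd_iff]; omega
        simp only [h]
      rw [hodd]
      exact ih n' (by omega) (by omega) m k hm hk

/-- With `a = 1` if `m` is odd and `2` if `m` is even, and `b = 1` if `n` is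
odd and `2` if `n` is even, we have
`𝒢(T_{m} ⊙_k T_{n}) = 𝒢(T_{a} ⊙_k T_{b})` for all positive `m, n, k`. -/
theorem nkGrundy_doubleStar_parity (m n k : ℕ) (hm : 1 ≤ m) (hn : 1 ≤ n)
    (hk : 1 ≤ k) :
    nkGrundy (doubleStar m n k) (Finset.range (m + k + n + 1)) =
      nkGrundy
        (doubleStar (if Odd m then 1 else 2) (if Odd n then 1 else 2) k)
        (Finset.range ((if Odd m then 1 else 2) + k + (if Odd n then 1 else 2) + 1)) := by
  rw [mainM m hm n k hn hk]
  exact mainN n hn (if Odd m then 1 else 2) k (by split_ifs <;> omega) hk
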